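/- arXiv:1008.5259 — 8 statements merged into one kernel-verified Lean document; each statement's English description precedes it below -/
import Mathlib

section
/- Every cylinder circumscribed to the four vertices of the regular tetrahedron v₁=(1,1,1), v₂=(1,−1,−1), v₃=(−1,1,−1), v₄=(−1,−1,1) has radius ρ ≥ √2, and there exists a circumscribed cylinder of radius exactly √2. (Since the edge length is 2√2, the ratio of the minimal circumscribed-cylinder radius to the edge length is 1/2.) -/
/-- The four vertices of the regular tetrahedron of edge length `2√2`
centered at the origin. -/
noncomputable def tetra : Fin 4 → EuclideanSpace ℝ (Fin 3) := fun i =>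
  (WithLp.equiv 2 (Fin 3 → ℝ)).symm
    (![![1, 1, 1], ![1, -1, -1], ![-1, 1, -1], ![-1, -1, 1]] i)

/-- Every cylinder circumscribed to the regular tetrahedron has radius `ρ ≥ √2`,
and there is a circumscribed cylinder of radius exactly `√2`. -/
theorem min_radius_circumscribed_cylinder_tetrahedron :
    (∀ (u c : EuclideanSpace ℝ (Fin 3)) (ρ : ℝ), ‖u‖ = 1 → 0 ≤ ρ →
        (∀ i : Fin 4, ‖tetra i - c‖ ^ 2 - (inner ℝ (tetra i - c) u : ℝ) ^ 2 = ρ ^ 2) →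
        Real.sqrt 2 ≤ ρ) ∧
    (∃ (u c : EuclideanSpace ℝ (Fin 3)), ‖u‖ = 1 ∧
        ∀ i : Fin 4, ‖tetra i - c‖ ^ 2 - (inner ℝ (tetra i - c) u : ℝ) ^ 2
          = Real.sqrt 2 ^ 2) := by
  constructor
  · intro u c ρ hu hρ h
    have e1 := h 0; have e2 := h 1; have e3 := h 2; have e4 := h 3
    rw [← real_inner_self_eq_norm_sq] at e1 e2 e3 e4
    simp only [tetra, PiLp.inner_apply, Fin.sum_univ_three, WithLp.equiv_symm_apply, PiLp.toLp_apply,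
      PiLp.sub_apply, RCLike.inner_apply, conj_trivial, Matrix.cons_val_zero, Matrix.cons_val_one,
      Matrix.head_cons, Matrix.cons_val_two, Matrix.tail_cons, Matrix.cons_val_three]
      at e1 e2 e3 e4
    set u1 := u 0; set u2 := u 1; set u3 := u 2
    set c1 := c 0; set c2 := c 1; set c3 := c 2
    have hu2 : u1 ^ 2 + u2 ^ 2 + u3 ^ 2 = 1 := by
      have h1 := congrArg (· ^ 2) hu
      rw [EuclideanSpace.norm_eq] at h1
      simp only [Fin.sum_univ_three] at h1
      rw [sq, Real.mul_self_sqrt (by positivity)] at h1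
      simpa [sq] using h1
    set s := u1 * c1 + u2 * c2 + u3 * c3 with hs
    have hF1 : c1 - u1 * s + u2 * u3 = 0 := by
      linear_combination (-(1:ℝ)/8) * e1 + (-(1:ℝ)/8) * e2 + ((1:ℝ)/8) * e3 + ((1:ℝ)/8) * e4
    have hF2 : c2 - u2 * s + u1 * u3 = 0 := by
      linear_combination (-(1:ℝ)/8) * e1 + ((1:ℝ)/8) * e2 + (-(1:ℝ)/8) * e3 + ((1:ℝ)/8) * e4
    have hF3 : c3 - u3 * s + u1 * u2 = 0 := by
      linear_combination (-(1:ℝ)/8) * e1 + ((1:ℝ)/8) * e2 + ((1:ℝ)/8) * e3 + (-(1:ℝ)/8) * e4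
    have hP : u1 * u2 * u3 = 0 := by
      linear_combination (u1/3) * hF1 + (u2/3) * hF2 + (u3/3) * hF3 + (s/3) * hu2
    have hrho : ρ ^ 2 = 2 + (u1*u2 + u1*u3 + u2*u3) ^ 2 := by
      linear_combination (-1 : ℝ) * e1
        + (c1 - u1*s + u2*u3 - 2 + 2*(u1*s - u2*u3)) * hF1
        + (c2 - u2*s + u1*u3 - 2 + 2*(u2*s - u1*u3)) * hF2
        + (c3 - u3*s + u1*u2 - 2 + 2*(u3*s - u1*u2)) * hF3
        + (s^2 - 1) * hu2 - (6*s + 2*(u1+u2+u3)) * hP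
    have h2 : Real.sqrt 2 ≤ Real.sqrt (ρ ^ 2) :=
      Real.sqrt_le_sqrt (by nlinarith [sq_nonneg (u1*u2 + u1*u3 + u2*u3)])
    rwa [Real.sqrt_sq hρ] at h2
  · refine ⟨(WithLp.equiv 2 (Fin 3 → ℝ)).symm ![1, 0, 0], 0, ?_, ?_⟩
    · rw [EuclideanSpace.norm_eq]
      simp [Fin.sum_univ_three]
    · intro i
      rw [← real_inner_self_eq_norm_sq, Real.sq_sqrt (by norm_num : (0:ℝ) ≤ 2)]
      fin_cases i <;>
        simp [tetra, PiLp.inner_apply, Fin.sum_univ_three, WithLp.equiv_symm_apply, PiLp.toLp_apply,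
          PiLp.sub_apply, Matrix.cons_val_zero, Matrix.cons_val_one, Matrix.head_cons,
          Matrix.cons_val_two, Matrix.tail_cons, Matrix.cons_val_three, EuclideanSpace.norm_sq_eq] <;> norm_num
end

section
/- Let u be a unit vector, c ∈ ℝ³ with ⟨c,u⟩ = 0, and ρ ≥ 0 such that the cylinder (u,c,ρ) is circumscribed to the four vertices v₁,…,v₄ of the regular tetrahedron. Then ρ = √2 if and only if c = 0 and u ∈ {±e₁, ±e₂, ±e₃} (the standard basis vectors and their opposites). In particular there are exactly three minimal-radius circumscribed cylinders; their axes pass through the center of the tetrahedron and are mutually orthogonal. -/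
set_option maxHeartbeats 1000000

/-- For a cylinder circumscribed to the regular tetrahedron (with axis point `c`
orthogonal to the unit axis direction `u`), the radius equals `√2` iff `c = 0` and `u` is
one of the six standard basis vectors and their opposites.  In particular there are exactly
three minimal-radius circumscribed cylinders, whose axes pass through the center of the
tetrahedron and are mutually orthogonal. -/
theorem min_cylinders_tetrahedron_characterization
    (u c : EuclideanSpace ℝ (Fin 3)) (ρ : ℝ)
    (hu : ‖u‖ = 1) (hcu : (inner ℝ c u : ℝ) = 0) (hρ : 0 ≤ ρ)
    (hcirc : ∀ i : Fin 4, ‖tetra i - c‖ ^ 2 - (inner ℝ (tetra i - c) u : ℝ) ^ 2 = ρ ^ 2) :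
    ρ = Real.sqrt 2 ↔
      (c = 0 ∧ ∃ j : Fin 3,
        u = EuclideanSpace.single j 1 ∨ u = -EuclideanSpace.single j 1) := by
  have hu2 : u 0 ^ 2 + u 1 ^ 2 + u 2 ^ 2 = 1 := by
    have h := real_inner_self_eq_norm_sq u
    rw [hu] at h
    simp only [PiLp.inner_apply, RCLike.inner_apply, conj_trivial, Fin.sum_univ_three] at h
    nlinarith [h]
  have hcu2 : c 0 * u 0 + c 1 * u 1 + c 2 * u 2 = 0 := by
    simp only [PiLp.inner_apply, RCLike.inner_apply, conj_trivial, Fin.sum_univ_three] at hcu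
    linarith [hcu]
  have key : ∀ i : Fin 4, ∀ x y z : ℝ,
      tetra i = (WithLp.equiv 2 (Fin 3 → ℝ)).symm ![x, y, z] →
      (x - c 0)^2 + (y - c 1)^2 + (z - c 2)^2
        - ((x - c 0)*u 0 + (y - c 1)*u 1 + (z - c 2)*u 2)^2 = ρ^2 := by
    intro i x y z hxyz
    have h := hcirc i
    rw [← real_inner_self_eq_norm_sq, hxyz] at h
    simp only [PiLp.inner_apply, RCLike.inner_apply, conj_trivial, Fin.sum_univ_three,
      PiLp.sub_apply, WithLp.equiv_symm_apply, WithLp.ofLp_toLp, Matrix.cons_val_zero, Matrix.cons_val_one,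
      Matrix.head_cons, Matrix.cons_val_two, Matrix.tail_cons] at h
    linarith [h]
  have h1 := key 0 1 1 1 rfl
  have h2 := key 1 1 (-1) (-1) rfl
  have h3 := key 2 (-1) 1 (-1) rfl
  have h4 := key 3 (-1) (-1) 1 rfl
  have hpe : c 0 = -(u 1 * u 2) := by
    linear_combination -(h1 + h2 - h3 - h4)/8 + u 0 * hcu2
  have hqe : c 1 = -(u 0 * u 2) := by
    linear_combination -(h1 - h2 + h3 - h4)/8 + u 1 * hcu2
  have hre : c 2 = -(u 0 * u 1) := by
    linear_combination -(h1 - h2 - h3 + h4)/8 + u 2 * hcu2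
  have hrho : ρ^2 = 2 + (c 0 ^2 + c 1 ^2 + c 2 ^2) := by
    linear_combination -(h1 + h2 + h3 + h4)/4 - hu2 - (c 0 * u 0 + c 1 * u 1 + c 2 * u 2)*hcu2
  clear h1 h2 h3 h4 key hcirc hcu hcu2 hu
  constructor
  · intro hρ2
    have hsq : ρ^2 = 2 := by
      rw [hρ2, Real.sq_sqrt (by norm_num : (0:ℝ) ≤ 2)]
    have hp0 : c 0 = 0 := by nlinarith [sq_nonneg (c 0), sq_nonneg (c 1), sq_nonneg (c 2)]
    have hq0 : c 1 = 0 := by nlinarith [sq_nonneg (c 0), sq_nonneg (c 1), sq_nonneg (c 2)]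
    have hr0 : c 2 = 0 := by nlinarith [sq_nonneg (c 0), sq_nonneg (c 1), sq_nonneg (c 2)]
    have hc0 : c = 0 := by
      ext i; fin_cases i
      · exact hp0
      · exact hq0
      · exact hr0
    refine ⟨hc0, ?_⟩
    have hbd : u 1 * u 2 = 0 := by rw [hp0] at hpe; linarith
    have had : u 0 * u 2 = 0 := by rw [hq0] at hqe; linarith
    have hab : u 0 * u 1 = 0 := by rw [hr0] at hre; linarith
    have main : ∀ j : Fin 3, u j = 1 ∨ u j = -1 →
        (∀ k : Fin 3, k ≠ j → u k = 0) →
        u = EuclideanSpace.single j 1 ∨ u = -EuclideanSpace.single j 1 := by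
      intro j hj hk
      rcases hj with hj | hj
      · left; ext i
        by_cases h : i = j
        · subst h; simp [EuclideanSpace.single_apply, hj]
        · simp [EuclideanSpace.single_apply, h, hk i h]
      · right; ext i
        by_cases h : i = j
        · subst h; simp [EuclideanSpace.single_apply, hj]
        · simp [EuclideanSpace.single_apply, h, hk i h]
    have sq1 : ∀ x : ℝ, x^2 = 1 → x = 1 ∨ x = -1 := by
      intro x hx
      have : (x - 1) * (x + 1) = 0 := by nlinarith
      rcases mul_eq_zero.1 this with h | h
      · left; linarith
      · right; linarith
    rcases mul_eq_zero.1 hab with ha | hb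
    · rcases mul_eq_zero.1 hbd with hb | hd
      · refine ⟨2, main 2 (sq1 _ (by linear_combination hu2 - u 0 * ha - u 1 * hb)) ?_⟩
        intro k hk; fin_cases k
        · exact ha
        · exact hb
        · simp at hk
      · refine ⟨1, main 1 (sq1 _ (by linear_combination hu2 - u 0 * ha - u 2 * hd)) ?_⟩
        intro k hk; fin_cases k
        · exact ha
        · simp at hk
        · exact hd
    · rcases mul_eq_zero.1 had with ha | hd
      · refine ⟨2, main 2 (sq1 _ (by linear_combination hu2 - u 0 * ha - u 1 * hb)) ?_⟩
        intro k hk; fin_cases k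
        · exact ha
        · exact hb
        · simp at hk
      · refine ⟨0, main 0 (sq1 _ (by linear_combination hu2 - u 1 * hb - u 2 * hd)) ?_⟩
        intro k hk; fin_cases k
        · simp at hk
        · exact hb
        · exact hd
  · rintro ⟨hc0, j, hj⟩
    have hp0 : c 0 = 0 := by rw [hc0]; rfl
    have hq0 : c 1 = 0 := by rw [hc0]; rfl
    have hr0 : c 2 = 0 := by rw [hc0]; rfl
    have hsq : ρ^2 = 2 := by rw [hrho, hp0, hq0, hr0]; ring
    have := Real.sqrt_sq hρ
    rw [hsq] at this
    exact this.symm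
end

section
/- Every cylinder circumscribed to the four vertices of the regular tetrahedron v₁=(1,1,1), v₂=(1,−1,−1), v₃=(−1,1,−1), v₄=(−1,−1,1) has radius ρ ≤ 3/2, and there exists a circumscribed cylinder of radius exactly 3/2. (Since the edge length is 2√2, the ratio of the maximal circumscribed-cylinder radius to the edge length is 3√2/8.) -/
lemma euclid_inner_eq (x y : EuclideanSpace ℝ (Fin 3)) :
    (inner ℝ x y : ℝ) = x 0 * y 0 + x 1 * y 1 + x 2 * y 2 := by
  simp [PiLp.inner_apply, Fin.sum_univ_three, RCLike.inner_apply, conj_trivial]; ring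

lemma euclid_norm_sq (x : EuclideanSpace ℝ (Fin 3)) :
    ‖x‖ ^ 2 = x 0 ^ 2 + x 1 ^ 2 + x 2 ^ 2 := by
  rw [← real_inner_self_eq_norm_sq, euclid_inner_eq]; ring

lemma aux_bound (x y ρ : ℝ) (hρ : 0 ≤ ρ) (h1 : x ^ 2 + y ^ 2 = 1)
    (h2 : ρ ^ 2 = 2 + x ^ 2 * y ^ 2) : ρ ≤ 3 / 2 := by
  have h1sq : (x ^ 2 + y ^ 2) ^ 2 = 1 := by rw [h1]; norm_num
  nlinarith [sq_nonneg (x ^ 2 - y ^ 2), sq_nonneg (ρ - 3 / 2), hρ, h1sq, h2]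

/-- Every cylinder circumscribed to the regular tetrahedron has radius `ρ ≤ 3/2`,
and there is a circumscribed cylinder of radius exactly `3/2`. -/
theorem max_radius_circumscribed_cylinder_tetrahedron :
    (∀ (u c : EuclideanSpace ℝ (Fin 3)) (ρ : ℝ), ‖u‖ = 1 → 0 ≤ ρ →
        (∀ i : Fin 4, ‖tetra i - c‖ ^ 2 - (inner ℝ (tetra i - c) u : ℝ) ^ 2 = ρ ^ 2) →
        ρ ≤ 3 / 2) ∧
    (∃ (u c : EuclideanSpace ℝ (Fin 3)), ‖u‖ = 1 ∧
        ∀ i : Fin 4, ‖tetra i - c‖ ^ 2 - (inner ℝ (tetra i - c) u : ℝ) ^ 2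
          = (3 / 2 : ℝ) ^ 2) := by
  constructor
  · intro u c ρ hu hρ h
    set a := u 0
    set b := u 1
    set e := u 2
    set p := c 0
    set q := c 1
    set r := c 2
    have h0 : (1 - p) ^ 2 + (1 - q) ^ 2 + (1 - r) ^ 2 -
        ((1 - p) * a + (1 - q) * b + (1 - r) * e) ^ 2 = ρ ^ 2 := by
      have := h 0; rw [euclid_norm_sq, euclid_inner_eq] at this; exact this
    have h1 : (1 - p) ^ 2 + (-1 - q) ^ 2 + (-1 - r) ^ 2 -
        ((1 - p) * a + (-1 - q) * b + (-1 - r) * e) ^ 2 = ρ ^ 2 := by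
      have := h 1; rw [euclid_norm_sq, euclid_inner_eq] at this; exact this
    have h2 : (-1 - p) ^ 2 + (1 - q) ^ 2 + (-1 - r) ^ 2 -
        ((-1 - p) * a + (1 - q) * b + (-1 - r) * e) ^ 2 = ρ ^ 2 := by
      have := h 2; rw [euclid_norm_sq, euclid_inner_eq] at this; exact this
    have h3 : (-1 - p) ^ 2 + (-1 - q) ^ 2 + (1 - r) ^ 2 -
        ((-1 - p) * a + (-1 - q) * b + (1 - r) * e) ^ 2 = ρ ^ 2 := by
      have := h 3; rw [euclid_norm_sq, euclid_inner_eq] at this; exact this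
    have hu2 : a ^ 2 + b ^ 2 + e ^ 2 = 1 := by
      have : ‖u‖ ^ 2 = 1 := by rw [hu]; norm_num
      rw [euclid_norm_sq] at this; exact this
    have hA : q + r = (b + e) * ((a * p + b * q + e * r) - a) := by
      linear_combination (h1 - h0) / 4
    have hB : p + r = (a + e) * ((a * p + b * q + e * r) - b) := by
      linear_combination (h2 - h0) / 4
    have hC : p + q = (a + b) * ((a * p + b * q + e * r) - e) := by
      linear_combination (h3 - h0) / 4
    have hp : p = a * (a * p + b * q + e * r) - b * e := by
      linear_combination (hB + hC - hA) / 2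
    have hq : q = b * (a * p + b * q + e * r) - a * e := by
      linear_combination (hA + hC - hB) / 2
    have hr : r = e * (a * p + b * q + e * r) - a * b := by
      linear_combination (hA + hB - hC) / 2
    have habe : a * b * e = 0 := by
      linear_combination (a * hp + b * hq + e * hr + (a * p + b * q + e * r) * hu2) / 3
    have hC2 : p ^ 2 + q ^ 2 + r ^ 2 =
        (a * (a * p + b * q + e * r) - b * e) ^ 2 +
        (b * (a * p + b * q + e * r) - a * e) ^ 2 +
        (e * (a * p + b * q + e * r) - a * b) ^ 2 := by
      linear_combination (p + (a * (a * p + b * q + e * r) - b * e)) * hp +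
        (q + (b * (a * p + b * q + e * r) - a * e)) * hq +
        (r + (e * (a * p + b * q + e * r) - a * b)) * hr
    have key2 : ρ ^ 2 = 2 + (a ^ 2 * b ^ 2 + a ^ 2 * e ^ 2 + b ^ 2 * e ^ 2) := by
      linear_combination (-(h0 + h1 + h2 + h3)) / 4 + hC2 -
        6 * (a * p + b * q + e * r) * habe +
        ((a * p + b * q + e * r) ^ 2 - 1) * hu2
    rcases mul_eq_zero.mp habe with hab | he
    · rcases mul_eq_zero.mp hab with ha | hb
      · refine aux_bound b e ρ hρ (by linear_combination hu2 - a * ha) ?_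
        rw [ha] at key2; linear_combination key2
      · refine aux_bound a e ρ hρ (by linear_combination hu2 - b * hb) ?_
        rw [hb] at key2; linear_combination key2
    · refine aux_bound a b ρ hρ (by linear_combination hu2 - e * he) ?_
      rw [he] at key2; linear_combination key2
  · have hs : Real.sqrt 2 * Real.sqrt 2 = 2 := Real.mul_self_sqrt (by norm_num)
    refine ⟨(WithLp.equiv 2 (Fin 3 → ℝ)).symm ![0, Real.sqrt 2 / 2, Real.sqrt 2 / 2],
      (WithLp.equiv 2 (Fin 3 → ℝ)).symm ![-(1 / 2), 0, 0], ?_, ?_⟩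
    · have hsq : ‖(WithLp.equiv 2 (Fin 3 → ℝ)).symm
          ![(0:ℝ), Real.sqrt 2 / 2, Real.sqrt 2 / 2]‖ ^ 2 = 1 := by
        rw [euclid_norm_sq]
        show (0:ℝ) ^ 2 + (Real.sqrt 2 / 2) ^ 2 + (Real.sqrt 2 / 2) ^ 2 = 1
        linear_combination hs / 2
      have h1 : (‖(WithLp.equiv 2 (Fin 3 → ℝ)).symm
          ![(0:ℝ), Real.sqrt 2 / 2, Real.sqrt 2 / 2]‖ - 1) *
          (‖(WithLp.equiv 2 (Fin 3 → ℝ)).symm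
          ![(0:ℝ), Real.sqrt 2 / 2, Real.sqrt 2 / 2]‖ + 1) = 0 := by
        linear_combination hsq
      rcases mul_eq_zero.mp h1 with h | h
      · linarith
      · linarith [norm_nonneg ((WithLp.equiv 2 (Fin 3 → ℝ)).symm
          ![(0:ℝ), Real.sqrt 2 / 2, Real.sqrt 2 / 2])]
    · intro i
      fin_cases i <;> rw [euclid_norm_sq, euclid_inner_eq]
      · show (1 - -(1/2:ℝ)) ^ 2 + (1 - 0) ^ 2 + (1 - 0) ^ 2 -
          ((1 - -(1/2:ℝ)) * 0 + (1 - 0) * (Real.sqrt 2 / 2) +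
            (1 - 0) * (Real.sqrt 2 / 2)) ^ 2 = (3/2:ℝ) ^ 2
        linear_combination -hs
      · show (1 - -(1/2:ℝ)) ^ 2 + (-1 - 0) ^ 2 + (-1 - 0) ^ 2 -
          ((1 - -(1/2:ℝ)) * 0 + (-1 - 0) * (Real.sqrt 2 / 2) +
            (-1 - 0) * (Real.sqrt 2 / 2)) ^ 2 = (3/2:ℝ) ^ 2
        linear_combination -hs
      · show (-1 - -(1/2:ℝ)) ^ 2 + (1 - 0) ^ 2 + (-1 - 0) ^ 2 -
          ((-1 - -(1/2:ℝ)) * 0 + (1 - 0) * (Real.sqrt 2 / 2) +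
            (-1 - 0) * (Real.sqrt 2 / 2)) ^ 2 = (3/2:ℝ) ^ 2
        ring
      · show (-1 - -(1/2:ℝ)) ^ 2 + (-1 - 0) ^ 2 + (1 - 0) ^ 2 -
          ((-1 - -(1/2:ℝ)) * 0 + (-1 - 0) * (Real.sqrt 2 / 2) +
            (1 - 0) * (Real.sqrt 2 / 2)) ^ 2 = (3/2:ℝ) ^ 2
        ring
end

section
/- Let u be a unit vector, c ∈ ℝ³ with ⟨c,u⟩ = 0, and ρ ≥ 0 such that the cylinder (u,c,ρ) is circumscribed to the four vertices v₁,…,v₄ of the regular tetrahedron. Then ρ = 3/2 if and only if exactly one coordinate of u is zero and the other two coordinates are each ±1/√2; these twelve unit vectors give six distinct axis directions, namely the six directions parallel to the edges of the tetrahedron. In particular there are exactly six maximal-radius circumscribed cylinders. -/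
private lemma edge_aux (u : EuclideanSpace ℝ (Fin 3)) (a b : Fin 4) (s : ℝ)
    (h : ∀ k : Fin 3, tetra a k - tetra b k = s * u k) :
    tetra a - tetra b = s • u := by
  ext k
  simpa [PiLp.sub_apply, PiLp.smul_apply, smul_eq_mul] using h k

private lemma sq_half_aux (a : ℝ)
    (h : a = 1 / Real.sqrt 2 ∨ a = -(1 / Real.sqrt 2)) : a ^ 2 = 1 / 2 := by
  have hinv : (1 / Real.sqrt 2) ^ 2 = 1 / 2 := by
    rw [div_pow, one_pow, Real.sq_sqrt (by norm_num : (0:ℝ) ≤ 2)]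
  rcases h with h | h <;> rw [h]
  · exact hinv
  · rw [neg_pow]; simp [hinv]

private lemma pm_aux (a : ℝ) (ha : a ^ 2 = 1 / 2) :
    a = 1 / Real.sqrt 2 ∨ a = -(1 / Real.sqrt 2) := by
  have hinv : (1 / Real.sqrt 2) ^ 2 = 1 / 2 := by
    rw [div_pow, one_pow, Real.sq_sqrt (by norm_num : (0:ℝ) ≤ 2)]
  have h2 : (a - 1 / Real.sqrt 2) * (a + 1 / Real.sqrt 2) = 0 := by
    linear_combination ha - hinv
  rcases mul_eq_zero.mp h2 with h | h
  · left; linarith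
  · right; linarith

private lemma key2_aux (a b : ℝ) (h1 : a ^ 2 + b ^ 2 = 1) (h2 : a ^ 2 * b ^ 2 = 1 / 4) :
    a ^ 2 = 1 / 2 ∧ b ^ 2 = 1 / 2 := by
  have h3 : (a ^ 2 - 1 / 2) ^ 2 = 0 := by linear_combination a ^ 2 * h1 - h2
  have h4 : (b ^ 2 - 1 / 2) ^ 2 = 0 := by linear_combination b ^ 2 * h1 - h2
  constructor
  · have := (pow_eq_zero_iff two_ne_zero).mp h3; linarith
  · have := (pow_eq_zero_iff two_ne_zero).mp h4; linarith

set_option maxHeartbeats 1000000 in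
private lemma part2_aux (u : EuclideanSpace ℝ (Fin 3)) (j : Fin 3) (hj : u j = 0)
    (hk : ∀ k : Fin 3, k ≠ j →
      (u k = 1 / Real.sqrt 2 ∨ u k = -(1 / Real.sqrt 2))) :
    ∃ i j : Fin 4, i ≠ j ∧ ∃ s : ℝ, tetra i - tetra j = s • u := by
  have hs : 2 * Real.sqrt 2 * (1 / Real.sqrt 2) = 2 := by
    have hs2 : Real.sqrt 2 ≠ 0 := by positivity
    field_simp
  fin_cases j
  · have hj0 : u 0 = 0 := hj
    rcases hk 1 (by decide) with ha | ha <;> rcases hk 2 (by decide) with hb | hb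
    · exact ⟨0, 1, by decide, 2*Real.sqrt 2, edge_aux _ _ _ _ (by
        intro k; fin_cases k <;> simp [tetra, hj0, ha, hb] <;> nlinarith [hs])⟩
    · exact ⟨2, 3, by decide, 2*Real.sqrt 2, edge_aux _ _ _ _ (by
        intro k; fin_cases k <;> simp [tetra, hj0, ha, hb] <;> nlinarith [hs])⟩
    · exact ⟨3, 2, by decide, 2*Real.sqrt 2, edge_aux _ _ _ _ (by
        intro k; fin_cases k <;> simp [tetra, hj0, ha, hb] <;> nlinarith [hs])⟩
    · exact ⟨1, 0, by decide, 2*Real.sqrt 2, edge_aux _ _ _ _ (by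
        intro k; fin_cases k <;> simp [tetra, hj0, ha, hb] <;> nlinarith [hs])⟩
  · have hj0 : u 1 = 0 := hj
    rcases hk 0 (by decide) with ha | ha <;> rcases hk 2 (by decide) with hb | hb
    · exact ⟨0, 2, by decide, 2*Real.sqrt 2, edge_aux _ _ _ _ (by
        intro k; fin_cases k <;> simp [tetra, hj0, ha, hb] <;> nlinarith [hs])⟩
    · exact ⟨1, 3, by decide, 2*Real.sqrt 2, edge_aux _ _ _ _ (by
        intro k; fin_cases k <;> simp [tetra, hj0, ha, hb] <;> nlinarith [hs])⟩
    · exact ⟨3, 1, by decide, 2*Real.sqrt 2, edge_aux _ _ _ _ (by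
        intro k; fin_cases k <;> simp [tetra, hj0, ha, hb] <;> nlinarith [hs])⟩
    · exact ⟨2, 0, by decide, 2*Real.sqrt 2, edge_aux _ _ _ _ (by
        intro k; fin_cases k <;> simp [tetra, hj0, ha, hb] <;> nlinarith [hs])⟩
  · have hj0 : u 2 = 0 := hj
    rcases hk 0 (by decide) with ha | ha <;> rcases hk 1 (by decide) with hb | hb
    · exact ⟨0, 3, by decide, 2*Real.sqrt 2, edge_aux _ _ _ _ (by
        intro k; fin_cases k <;> simp [tetra, hj0, ha, hb] <;> nlinarith [hs])⟩
    · exact ⟨1, 2, by decide, 2*Real.sqrt 2, edge_aux _ _ _ _ (by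
        intro k; fin_cases k <;> simp [tetra, hj0, ha, hb] <;> nlinarith [hs])⟩
    · exact ⟨2, 1, by decide, 2*Real.sqrt 2, edge_aux _ _ _ _ (by
        intro k; fin_cases k <;> simp [tetra, hj0, ha, hb] <;> nlinarith [hs])⟩
    · exact ⟨3, 0, by decide, 2*Real.sqrt 2, edge_aux _ _ _ _ (by
        intro k; fin_cases k <;> simp [tetra, hj0, ha, hb] <;> nlinarith [hs])⟩

set_option maxHeartbeats 1000000 in
/-- For a cylinder circumscribed to the regular tetrahedron (with axis point `c` orthogonal
to the unit axis direction `u`), the radius equals `3/2` iff exactly one coordinate of `u` is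
zero and the other two are each `±1/√2`; moreover such an axis direction is parallel to one of
the six edges of the tetrahedron.  In particular there are exactly six maximal-radius
circumscribed cylinders. -/
theorem max_cylinders_tetrahedron_characterization
    (u c : EuclideanSpace ℝ (Fin 3)) (ρ : ℝ)
    (hu : ‖u‖ = 1) (hcu : (inner ℝ c u : ℝ) = 0) (hρ : 0 ≤ ρ)
    (hcirc : ∀ i : Fin 4, ‖tetra i - c‖ ^ 2 - (inner ℝ (tetra i - c) u : ℝ) ^ 2 = ρ ^ 2) :
    (ρ = 3 / 2 ↔
      ∃ j : Fin 3, u j = 0 ∧ ∀ k : Fin 3, k ≠ j →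
        (u k = 1 / Real.sqrt 2 ∨ u k = -(1 / Real.sqrt 2))) ∧
    (ρ = 3 / 2 →
      ∃ i j : Fin 4, i ≠ j ∧ ∃ s : ℝ, tetra i - tetra j = s • u) := by
  have hinner : ∀ v w : EuclideanSpace ℝ (Fin 3),
      (inner ℝ v w : ℝ) = v 0 * w 0 + v 1 * w 1 + v 2 * w 2 := by
    intro v w
    simp [PiLp.inner_apply, Fin.sum_univ_three, RCLike.inner_apply, mul_comm]
  have hnorm : ∀ v : EuclideanSpace ℝ (Fin 3), ‖v‖^2 = v 0^2 + v 1^2 + v 2^2 := by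
    intro v
    rw [← real_inner_self_eq_norm_sq, hinner]; ring
  have e0 := hcirc 0
  have e1 := hcirc 1
  have e2 := hcirc 2
  have e3 := hcirc 3
  rw [hnorm, hinner] at e0 e1 e2 e3
  simp only [tetra, PiLp.sub_apply, WithLp.equiv_symm_apply, PiLp.toLp_apply, Matrix.cons_val_zero,
    Matrix.cons_val_one, Matrix.head_cons, Matrix.cons_val_two, Matrix.tail_cons,
    Matrix.cons_val_three] at e0 e1 e2 e3
  rw [hinner] at hcu
  have hu2 : u 0^2 + u 1^2 + u 2^2 = 1 := by
    have h := hnorm u; rw [hu] at h; linarith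
  have hp : c 0 = -(u 1 * u 2) := by
    linear_combination (-(1:ℝ)/8)*e0 + (-(1:ℝ)/8)*e1 + (1/8)*e2 + (1/8)*e3 + (u 0) * hcu
  have hq : c 1 = -(u 0 * u 2) := by
    linear_combination (-(1:ℝ)/8)*e0 + (1/8)*e1 + (-(1:ℝ)/8)*e2 + (1/8)*e3 + (u 1) * hcu
  have hr : c 2 = -(u 0 * u 1) := by
    linear_combination (-(1:ℝ)/8)*e0 + (1/8)*e1 + (1/8)*e2 + (-(1:ℝ)/8)*e3 + (u 2) * hcu
  have hxyz : u 0 * u 1 * u 2 = 0 := by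
    linear_combination (u 0/3)*hp + (u 1/3)*hq + (u 2/3)*hr - (1/3)*hcu
  have hrho : ρ^2 = 2 + (u 0*u 1)^2 + (u 1*u 2)^2 + (u 0*u 2)^2 := by
    rw [hp, hq, hr] at e0 hcu
    linear_combination (-1)*e0 + (-1)*hu2 + (2*(u 0 + u 1 + u 2) + 3*u 0*u 1*u 2) * hcu
  have hiff : ρ = 3 / 2 ↔
      ∃ j : Fin 3, u j = 0 ∧ ∀ k : Fin 3, k ≠ j →
        (u k = 1 / Real.sqrt 2 ∨ u k = -(1 / Real.sqrt 2)) := by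
    constructor
    · intro h32
      have h94 : ρ^2 = 9/4 := by rw [h32]; norm_num
      have hS : (u 0*u 1)^2 + (u 1*u 2)^2 + (u 0*u 2)^2 = 1/4 := by
        linarith [hrho, h94]
      rcases mul_eq_zero.mp hxyz with h01 | h2
      · rcases mul_eq_zero.mp h01 with h0 | h1
        · have ha : u 1^2 + u 2^2 = 1 := by linear_combination hu2 - u 0 * h0
          have hb : u 1^2 * u 2^2 = 1/4 := by
            linear_combination hS - (u 0*u 1^2 + u 0*u 2^2) * h0
          obtain ⟨h1', h2'⟩ := key2_aux _ _ ha hb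
          refine ⟨0, h0, ?_⟩
          intro k hk
          fin_cases k
          · exact absurd rfl hk
          · exact pm_aux _ h1'
          · exact pm_aux _ h2'
        · have ha : u 0^2 + u 2^2 = 1 := by linear_combination hu2 - u 1 * h1
          have hb : u 0^2 * u 2^2 = 1/4 := by
            linear_combination hS - (u 1*u 0^2 + u 1*u 2^2) * h1
          obtain ⟨h1', h2'⟩ := key2_aux _ _ ha hb
          refine ⟨1, h1, ?_⟩
          intro k hk
          fin_cases k
          · exact pm_aux _ h1'
          · exact absurd rfl hk
          · exact pm_aux _ h2'
      · have ha : u 0^2 + u 1^2 = 1 := by linear_combination hu2 - u 2 * h2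
        have hb : u 0^2 * u 1^2 = 1/4 := by
          linear_combination hS - (u 2*u 0^2 + u 2*u 1^2) * h2
        obtain ⟨h1', h2'⟩ := key2_aux _ _ ha hb
        refine ⟨2, h2, ?_⟩
        intro k hk
        fin_cases k
        · exact pm_aux _ h1'
        · exact pm_aux _ h2'
        · exact absurd rfl hk
    · rintro ⟨j, hj, hk⟩
      have hfin : ρ^2 = 9/4 → ρ = 3/2 := by
        intro h
        have h2 : (ρ - 3/2)*(ρ + 3/2) = 0 := by linear_combination h
        rcases mul_eq_zero.mp h2 with h | h
        · linarith
        · linarith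
      fin_cases j
      · have hj0 : u 0 = 0 := hj
        have ha := sq_half_aux _ (hk 1 (by decide))
        have hb := sq_half_aux _ (hk 2 (by decide))
        apply hfin
        linear_combination hrho + (u 0*u 1^2 + u 0*u 2^2)*hj0 + u 2^2*ha + (1/2)*hb
      · have hj0 : u 1 = 0 := hj
        have ha := sq_half_aux _ (hk 0 (by decide))
        have hb := sq_half_aux _ (hk 2 (by decide))
        apply hfin
        linear_combination hrho + (u 1*u 0^2 + u 1*u 2^2)*hj0 + u 2^2*ha + (1/2)*hb
      · have hj0 : u 2 = 0 := hj
        have ha := sq_half_aux _ (hk 0 (by decide))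
        have hb := sq_half_aux _ (hk 1 (by decide))
        apply hfin
        linear_combination hrho + (u 2*u 0^2 + u 2*u 1^2)*hj0 + u 1^2*ha + (1/2)*hb
  refine ⟨hiff, fun h32 => ?_⟩
  obtain ⟨j, hj, hk⟩ := hiff.mp h32
  exact part2_aux u j hj hk
end

section
/- A unit vector u ∈ ℝ³ satisfies ⟨u, vᵢ⟩² = 1 for all four regular tetrahedron vertices vᵢ if and only if u is one of the six vectors ±e₁, ±e₂, ±e₃ of the standard basis and their opposites. -/
/-- A unit vector `u ∈ ℝ³` satisfies `⟨u, vᵢ⟩² = 1` for all four regular tetrahedron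
vertices iff `u` is a standard basis vector or the opposite of one. -/
theorem inner_sq_one_iff_basis (u : EuclideanSpace ℝ (Fin 3)) (hu : ‖u‖ = 1) :
    (∀ i : Fin 4, (inner ℝ u (tetra i) : ℝ) ^ 2 = 1) ↔
      ∃ j : Fin 3, u = EuclideanSpace.single j 1 ∨ u = -EuclideanSpace.single j 1 := by
  set a := u 0 with ha0
  set b := u 1 with hb0
  set c := u 2 with hc0
  have hn : a ^ 2 + b ^ 2 + c ^ 2 = 1 := by
    have := real_inner_self_eq_norm_sq u
    rw [hu] at this
    simp only [PiLp.inner_apply, RCLike.inner_apply, conj_trivial, Fin.sum_univ_three] at this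
    nlinarith [this]
  constructor
  · intro h
    have h1 := h 0
    have h2 := h 1
    have h3 := h 2
    have h4 := h 3
    simp only [tetra, PiLp.inner_apply, RCLike.inner_apply, conj_trivial,
      WithLp.equiv_symm_apply, PiLp.toLp_apply, Fin.sum_univ_three, Matrix.cons_val_zero,
      Matrix.cons_val_one, Matrix.head_cons, Matrix.cons_val_two, Matrix.cons_val_three, Matrix.tail_cons] at h1 h2 h3 h4
    have hab : a * b = 0 := by linear_combination (h1 - h3 - h2 + h4) / 8
    have hac : a * c = 0 := by linear_combination (h1 - h2 + h3 - h4) / 8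
    have hbc : b * c = 0 := by linear_combination (h1 - h3 + h2 - h4) / 8
    by_cases ha : a = 0
    · by_cases hb : b = 0
      · have hc : c ^ 2 = 1 := by nlinarith
        have : (c - 1) * (c + 1) = 0 := by linear_combination hc
        rcases mul_eq_zero.1 this with hc1 | hc1
        · refine ⟨2, Or.inl ?_⟩
          ext k
          fin_cases k <;>
            simp [EuclideanSpace.single_apply, ← ha0, ← hb0, ← hc0, ha, hb] <;> linarith
        · refine ⟨2, Or.inr ?_⟩
          ext k
          fin_cases k <;>
            simp [EuclideanSpace.single_apply, ← ha0, ← hb0, ← hc0, ha, hb] <;> linarith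
      · have hc : c = 0 := by
          rcases mul_eq_zero.1 hbc with h | h
          · exact absurd h hb
          · exact h
        have hb2 : b ^ 2 = 1 := by nlinarith
        have : (b - 1) * (b + 1) = 0 := by linear_combination hb2
        rcases mul_eq_zero.1 this with hb1 | hb1
        · refine ⟨1, Or.inl ?_⟩
          ext k
          fin_cases k <;>
            simp [EuclideanSpace.single_apply, ← ha0, ← hb0, ← hc0, ha, hc] <;> linarith
        · refine ⟨1, Or.inr ?_⟩
          ext k
          fin_cases k <;>
            simp [EuclideanSpace.single_apply, ← ha0, ← hb0, ← hc0, ha, hc] <;> linarith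
    · have hb : b = 0 := by
        rcases mul_eq_zero.1 hab with h | h
        · exact absurd h ha
        · exact h
      have hc : c = 0 := by
        rcases mul_eq_zero.1 hac with h | h
        · exact absurd h ha
        · exact h
      have ha2 : a ^ 2 = 1 := by nlinarith
      have : (a - 1) * (a + 1) = 0 := by linear_combination ha2
      rcases mul_eq_zero.1 this with ha1 | ha1
      · refine ⟨0, Or.inl ?_⟩
        ext k
        fin_cases k <;>
          simp [EuclideanSpace.single_apply, ← ha0, ← hb0, ← hc0, hb, hc] <;> linarith
      · refine ⟨0, Or.inr ?_⟩
        ext k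
        fin_cases k <;>
          simp [EuclideanSpace.single_apply, ← ha0, ← hb0, ← hc0, hb, hc] <;> linarith
  · rintro ⟨j, hj | hj⟩ <;> intro i <;> subst hj <;>
      fin_cases i <;> fin_cases j <;>
      simp [tetra, PiLp.inner_apply, EuclideanSpace.single_apply,
        WithLp.equiv_symm_apply, PiLp.toLp_apply, Fin.sum_univ_three, Matrix.cons_val_three] <;> norm_num
end

section
/- (Theorem 2) Under the standing hypotheses (five centered points x₁,…,x₅ spanning ℝ³), the 3×3 matrix M = Σᵢ tᵢBᵢ is the zero matrix if and only if two of the five points are identical, i.e. there exist indices i ≠ j with xᵢ = xⱼ. -/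
open Matrix

/-- `Bᵢ = tr(Vᵢ − V)·I₃ − (Vᵢ − V)` where `Vᵢ = xᵢxᵢᵀ` and `V = (Σⱼ xⱼxⱼᵀ)/5`. -/
noncomputable def Bmat (x : Fin 5 → Fin 3 → ℝ) (i : Fin 5) : Matrix (Fin 3) (Fin 3) ℝ :=
  (vecMulVec (x i) (x i) - (5 : ℝ)⁻¹ • ∑ j, vecMulVec (x j) (x j)).trace •
      (1 : Matrix (Fin 3) (Fin 3) ℝ)
    - (vecMulVec (x i) (x i) - (5 : ℝ)⁻¹ • ∑ j, vecMulVec (x j) (x j))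

open Finset


lemma quad_sum (x : Fin 5 → Fin 3 → ℝ) (t : Fin 5 → ℝ)
    (hA : ∀ j k, ∑ i, t i * (x i j * x i k) = 0)
    (htX : ∀ j, ∑ i, t i * x i j = 0) (ht1 : ∑ i, t i = 0)
    (p : Fin 3 → ℝ) (j k : Fin 3) :
    ∑ i, t i * ((x i j - p j) * (x i k - p k)) = 0 := by
  have h1 := hA j k
  have h2 := htX j
  have h3 := htX k
  simp only [Fin.sum_univ_five] at h1 h2 h3 ht1 ⊢
  linear_combination h1 - p k * h2 - p j * h3 + (p j * p k) * ht1

lemma CS_sum (x : Fin 5 → Fin 3 → ℝ) (t : Fin 5 → ℝ)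
    (hA : ∀ j k, ∑ i, t i * (x i j * x i k) = 0)
    (htX : ∀ j, ∑ i, t i * x i j = 0) (ht1 : ∑ i, t i = 0)
    (u v : Fin 3 → ℝ) :
    ∑ i, t i * ((∑ j, (x i j - u j)^2) * (∑ j, (v j - u j)^2)
      - (∑ j, (x i j - u j) * (v j - u j))^2) = 0 := by
  have K : ∀ j k, ∑ i, t i * ((x i j - u j) * (x i k - u k)) = 0 :=
    quad_sum x t hA htX ht1 u
  have K00 := K 0 0; have K01 := K 0 1; have K02 := K 0 2
  have K11 := K 1 1; have K12 := K 1 2; have K22 := K 2 2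
  simp only [Fin.sum_univ_five] at K00 K01 K02 K11 K12 K22 ⊢
  simp only [Fin.sum_univ_three]
  set w0 := v 0 - u 0; set w1 := v 1 - u 1; set w2 := v 2 - u 2
  linear_combination (w0^2 + w1^2 + w2^2) * (K00 + K11 + K22)
    - w0^2 * K00 - w1^2 * K11 - w2^2 * K22
    - 2*w0*w1 * K01 - 2*w0*w2 * K02 - 2*w1*w2 * K12

lemma sq3_zero {f : Fin 3 → ℝ} (h : ∑ j, (f j)^2 = 0) : ∀ j, f j = 0 := by
  intro j
  have := (Finset.sum_eq_zero_iff_of_nonneg (fun i _ => sq_nonneg (f i))).mp h j (mem_univ j)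
  exact pow_eq_zero_iff two_ne_zero |>.mp this

lemma CS_eq_case (y w : Fin 3 → ℝ) (hw : ∑ j, (w j)^2 ≠ 0)
    (h : (∑ j, (y j)^2) * (∑ j, (w j)^2) - (∑ j, y j * w j)^2 = 0) :
    ∃ c : ℝ, ∀ j, y j = c * w j := by
  set c := (∑ j, y j * w j) / (∑ j, (w j)^2) with hc
  refine ⟨c, ?_⟩
  have hz : ∑ j, (y j - c * w j)^2 = 0 := by
    rw [hc]
    simp only [Fin.sum_univ_three] at h hw ⊢
    field_simp
    linear_combination (w 0 ^ 2 + w 1 ^ 2 + w 2 ^ 2) * h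
  intro j
  have := sq3_zero hz j
  linarith [this]

lemma forward_aux (x : Fin 5 → Fin 3 → ℝ)
    (hsum : ∑ i, x i = 0)
    (hspan : Submodule.span ℝ (Set.range x) = ⊤)
    (t : Fin 5 → ℝ) (ht : t ≠ 0)
    (htX : ∀ j : Fin 3, ∑ i, t i * x i j = 0)
    (ht1 : ∑ i, t i = 0)
    (hA : ∀ j k, ∑ i, t i * (x i j * x i k) = 0)
    (hPN : (univ.filter (fun i => 0 < t i)).card ≤ (univ.filter (fun i => t i < 0)).card) :
    ∃ i j : Fin 5, i ≠ j ∧ x i = x j := by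
  set P := univ.filter (fun i => 0 < t i) with hP
  set N := univ.filter (fun i => t i < 0) with hN
  -- existence of positive and negative entries
  have hne : ∃ i, t i ≠ 0 := by
    by_contra h
    push_neg at h
    exact ht (funext h)
  have hpos : ∃ i, 0 < t i := by
    by_contra h
    push_neg at h
    obtain ⟨i0, hi0⟩ := hne
    have := (Finset.sum_eq_zero_iff_of_nonpos (fun i _ => h i)).mp ht1 i0 (mem_univ i0)
    exact hi0 this
  have hneg : ∃ i, t i < 0 := by
    by_contra h
    push_neg at h
    obtain ⟨i0, hi0⟩ := hne
    have := (Finset.sum_eq_zero_iff_of_nonneg (fun i _ => h i)).mp ht1 i0 (mem_univ i0)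
    exact hi0 this
  have hdisj : Disjoint P N := by
    rw [Finset.disjoint_left]
    intro a haP haN
    rw [hP, mem_filter] at haP
    rw [hN, mem_filter] at haN
    linarith [haP.2, haN.2]
  have hcard_un : P.card + N.card ≤ 5 := by
    rw [← Finset.card_union_of_disjoint hdisj]
    calc (P ∪ N).card ≤ (univ : Finset (Fin 5)).card := card_le_card (subset_univ _)
      _ = 5 := by simp
  have hPpos : 1 ≤ P.card := by
    obtain ⟨i, hi⟩ := hpos
    exact Finset.card_pos.mpr ⟨i, by rw [hP]; simp [hi]⟩
  have hPle : P.card ≤ 2 := by omega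
  -- helper: weighted sum of squared distances to any point is zero
  have hdist : ∀ u : Fin 3 → ℝ, ∑ i, t i * (∑ j, (x i j - u j)^2) = 0 := by
    intro u
    have hjj : ∀ j, ∑ i, t i * ((x i j - u j) * (x i j - u j)) = 0 :=
      fun j => quad_sum x t hA htX ht1 u j j
    calc ∑ i, t i * (∑ j, (x i j - u j)^2)
        = ∑ i, ∑ j, t i * ((x i j - u j) * (x i j - u j)) := by
          refine Finset.sum_congr rfl fun i _ => ?_
          rw [Finset.mul_sum]
          exact Finset.sum_congr rfl fun j _ => by ring
      _ = ∑ j, ∑ i, t i * ((x i j - u j) * (x i j - u j)) := Finset.sum_comm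
      _ = 0 := Finset.sum_eq_zero fun j _ => hjj j
  interval_cases hPc : P.card
  · -- P.card = 1
    obtain ⟨i₁, hi₁⟩ := Finset.card_eq_one.mp hPc
    have hti₁ : 0 < t i₁ := by
      have : i₁ ∈ P := by rw [hi₁]; exact mem_singleton_self i₁
      rw [hP, mem_filter] at this
      exact this.2
    have hother : ∀ i, i ≠ i₁ → t i ≤ 0 := by
      intro i hne'
      by_contra h
      push_neg at h
      have : i ∈ P := by rw [hP, mem_filter]; exact ⟨mem_univ i, h⟩
      rw [hi₁, mem_singleton] at this
      exact hne' this
    have h1 := hdist (x i₁)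
    have hterm : ∀ i ∈ (univ : Finset (Fin 5)), t i * (∑ j, (x i j - x i₁ j)^2) ≤ 0 := by
      intro i _
      by_cases hii : i = i₁
      · subst hii; simp
      · exact mul_nonpos_of_nonpos_of_nonneg (hother i hii)
          (Finset.sum_nonneg fun j _ => sq_nonneg _)
    have hz := (Finset.sum_eq_zero_iff_of_nonpos hterm).mp h1
    obtain ⟨i₂, hi₂⟩ := hneg
    have hzz := hz i₂ (mem_univ i₂)
    have hsq : ∑ j, (x i₂ j - x i₁ j)^2 = 0 := by
      rcases mul_eq_zero.mp hzz with h | h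
      · exact absurd h (ne_of_lt hi₂)
      · exact h
    refine ⟨i₂, i₁, fun h => ?_, funext fun j => ?_⟩
    · rw [h] at hi₂; linarith
    · have := sq3_zero hsq j; linarith
  · -- P.card = 2
    obtain ⟨i₁, i₂, hi12, hi₁₂⟩ := Finset.card_eq_two.mp hPc
    by_cases hx12 : x i₁ = x i₂
    · exact ⟨i₁, i₂, hi12, hx12⟩
    have htP : ∀ i ∈ P, 0 < t i := by
      intro i hi; rw [hP, mem_filter] at hi; exact hi.2
    have hW : ∑ j, (x i₂ j - x i₁ j)^2 ≠ 0 := by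
      intro h
      exact hx12 (funext fun j => by have := sq3_zero h j; linarith)
    have hG := CS_sum x t hA htX ht1 (x i₁) (x i₂)
    have hgnn : ∀ i, 0 ≤ (∑ j, (x i j - x i₁ j)^2) * (∑ j, (x i₂ j - x i₁ j)^2)
        - (∑ j, (x i j - x i₁ j) * (x i₂ j - x i₁ j))^2 := by
      intro i
      have := Finset.sum_mul_sq_le_sq_mul_sq univ (fun j => x i j - x i₁ j)
        (fun j => x i₂ j - x i₁ j)
      linarith
    have hg1 : (∑ j, (x i₁ j - x i₁ j)^2) * (∑ j, (x i₂ j - x i₁ j)^2)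
        - (∑ j, (x i₁ j - x i₁ j) * (x i₂ j - x i₁ j))^2 = 0 := by simp
    have hg2 : (∑ j, (x i₂ j - x i₁ j)^2) * (∑ j, (x i₂ j - x i₁ j)^2)
        - (∑ j, (x i₂ j - x i₁ j) * (x i₂ j - x i₁ j))^2 = 0 := by
      have : ∑ j, (x i₂ j - x i₁ j) * (x i₂ j - x i₁ j) = ∑ j, (x i₂ j - x i₁ j)^2 :=
        Finset.sum_congr rfl fun j _ => (sq _).symm
      rw [this]; ring
    have hterm : ∀ i ∈ (univ : Finset (Fin 5)),
        t i * ((∑ j, (x i j - x i₁ j)^2) * (∑ j, (x i₂ j - x i₁ j)^2)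
          - (∑ j, (x i j - x i₁ j) * (x i₂ j - x i₁ j))^2) ≤ 0 := by
      intro i _
      by_cases h1 : i = i₁
      · subst h1; rw [hg1]; simp
      by_cases h2 : i = i₂
      · subst h2; rw [hg2]; simp
      have hiP : i ∉ P := by rw [hi₁₂]; simp [h1, h2]
      have hti : t i ≤ 0 := by
        by_contra h
        push_neg at h
        exact hiP (by rw [hP, mem_filter]; exact ⟨mem_univ i, h⟩)
      exact mul_nonpos_of_nonpos_of_nonneg hti (hgnn i)
    have hz := (Finset.sum_eq_zero_iff_of_nonpos hterm).mp hG
    set S := Submodule.span ℝ ({x i₁, x i₂} : Set (Fin 3 → ℝ)) with hS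
    have hm1 : x i₁ ∈ S := Submodule.subset_span (by simp)
    have hm2 : x i₂ ∈ S := Submodule.subset_span (by simp)
    have hmem_ne : ∀ i, t i ≠ 0 → x i ∈ S := by
      intro i hti
      by_cases h1 : i = i₁
      · subst h1; exact hm1
      by_cases h2 : i = i₂
      · subst h2; exact hm2
      have hgz : (∑ j, (x i j - x i₁ j)^2) * (∑ j, (x i₂ j - x i₁ j)^2)
          - (∑ j, (x i j - x i₁ j) * (x i₂ j - x i₁ j))^2 = 0 := by
        rcases mul_eq_zero.mp (hz i (mem_univ i)) with h | h
        · exact absurd h hti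
        · exact h
      obtain ⟨c, hc⟩ := CS_eq_case (fun j => x i j - x i₁ j) (fun j => x i₂ j - x i₁ j) hW hgz
      have hxi : x i = (1 - c) • x i₁ + c • x i₂ := by
        funext j
        have := hc j
        simp only [Pi.add_apply, Pi.smul_apply, smul_eq_mul]
        linarith
      rw [hxi]
      exact Submodule.add_mem _ (Submodule.smul_mem _ _ hm1) (Submodule.smul_mem _ _ hm2)
    -- at most one index with t i = 0
    have hN2 : 2 ≤ N.card := le_trans (by omega) hPN
    have hsub : P ∪ N ⊆ univ.filter (fun i => t i ≠ 0) := by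
      intro a ha
      rcases Finset.mem_union.mp ha with h | h
      · rw [hP, mem_filter] at h; rw [mem_filter]; exact ⟨mem_univ a, ne_of_gt h.2⟩
      · rw [hN, mem_filter] at h; rw [mem_filter]; exact ⟨mem_univ a, ne_of_lt h.2⟩
    have h4 : 4 ≤ (univ.filter (fun i => t i ≠ 0)).card := by
      have := card_le_card hsub
      rw [Finset.card_union_of_disjoint hdisj] at this
      omega
    have hZ : (univ.filter (fun i => t i = 0)).card ≤ 1 := by
      have h5 := Finset.card_filter_add_card_filter_not
        (s := (univ : Finset (Fin 5))) (p := fun i => t i = 0)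
      simp only [Finset.card_univ, Fintype.card_fin] at h5
      have heq : (univ.filter (fun a => ¬ (fun i => t i = 0) a)) = (univ.filter (fun i => t i ≠ 0)) := rfl
      rw [heq] at h5
      omega
    have hmem_zero : ∀ i, t i = 0 → x i ∈ S := by
      intro i hti
      have hother : ∀ k, k ≠ i → t k ≠ 0 := by
        intro k hk hk0
        have hsub2 : ({i, k} : Finset (Fin 5)) ⊆ univ.filter (fun i => t i = 0) := by
          intro a ha
          rw [mem_filter]
          rcases Finset.mem_insert.mp ha with h | h
          · subst h; exact ⟨mem_univ a, hti⟩
          · rw [mem_singleton] at h; subst h; exact ⟨mem_univ a, hk0⟩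
        have h2 : ({i, k} : Finset (Fin 5)).card = 2 := Finset.card_pair (Ne.symm hk)
        have := card_le_card hsub2
        omega
      have hx_eq : x i = -∑ k ∈ univ.erase i, x k := by
        have h0 : x i + ∑ k ∈ univ.erase i, x k = 0 := by
          rw [Finset.add_sum_erase _ _ (mem_univ i)]
          exact hsum
        exact eq_neg_of_add_eq_zero_left h0
      rw [hx_eq]
      exact Submodule.neg_mem _ (Submodule.sum_mem _ fun k hk =>
        hmem_ne k (hother k (Finset.ne_of_mem_erase hk)))
    have hall : ∀ i, x i ∈ S := by
      intro i
      by_cases h : t i = 0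
      · exact hmem_zero i h
      · exact hmem_ne i h
    -- dimension contradiction
    exfalso
    have hS_top : S = ⊤ := by
      rw [eq_top_iff, ← hspan]
      refine Submodule.span_le.mpr ?_
      rintro _ ⟨i, rfl⟩
      exact hall i
    have hfr : Module.finrank ℝ (Fin 3 → ℝ) ≤ 2 := by
      have h1 : Module.finrank ℝ S ≤ 2 := by
        classical
        calc Module.finrank ℝ S ≤ ({x i₁, x i₂} : Set (Fin 3 → ℝ)).toFinset.card :=
              finrank_span_le_card _
          _ ≤ 2 := by
              rw [Set.toFinset_insert, Set.toFinset_singleton]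
              exact le_trans (Finset.card_insert_le _ _) (by simp)
      rw [hS_top, finrank_top] at h1
      exact h1
    have : Module.finrank ℝ (Fin 3 → ℝ) = 3 := by simp
    omega

lemma Mzero_iff (x : Fin 5 → Fin 3 → ℝ) (t : Fin 5 → ℝ) (ht1 : ∑ i, t i = 0) :
    ∑ i, t i • Bmat x i = 0 ↔ ∀ j k, ∑ i, t i * (x i j * x i k) = 0 := by
  have hB : ∀ i, Bmat x i
      = ((vecMulVec (x i) (x i)).trace • (1 : Matrix (Fin 3) (Fin 3) ℝ) - vecMulVec (x i) (x i))
        - (((5:ℝ)⁻¹ • ∑ j, vecMulVec (x j) (x j)).trace • (1 : Matrix (Fin 3) (Fin 3) ℝ)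
           - (5:ℝ)⁻¹ • ∑ j, vecMulVec (x j) (x j)) := by
    intro i
    simp only [Bmat, trace_sub, sub_smul]
    abel
  have hM : ∑ i, t i • Bmat x i
      = (∑ i, t i * (vecMulVec (x i) (x i)).trace) • (1 : Matrix (Fin 3) (Fin 3) ℝ)
        - ∑ i, t i • vecMulVec (x i) (x i) := by
    simp only [hB, smul_sub, Finset.sum_sub_distrib, ← Finset.sum_smul, smul_smul,
      smul_eq_mul, ← Finset.sum_mul, ht1, zero_mul, zero_smul, sub_zero]
  have hNapp : ∀ j k, (∑ i, t i • vecMulVec (x i) (x i)) j k = ∑ i, t i * (x i j * x i k) := by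
    intro j k
    simp [Matrix.sum_apply, vecMulVec_apply]
  have htr : (∑ i, t i * (vecMulVec (x i) (x i)).trace)
      = ∑ j, ∑ i, t i * (x i j * x i j) := by
    simp only [trace, diag_apply, vecMulVec_apply, Finset.mul_sum]
    exact Finset.sum_comm
  rw [hM]
  constructor
  · intro h
    have heq : (∑ i, t i * (vecMulVec (x i) (x i)).trace) • (1 : Matrix (Fin 3) (Fin 3) ℝ)
        = ∑ i, t i • vecMulVec (x i) (x i) := sub_eq_zero.mp h
    set s := ∑ i, t i * (vecMulVec (x i) (x i)).trace with hs
    have htrace : s * 3 = s := by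
      have h2 := congrArg Matrix.trace heq
      simp only [trace_smul, trace_one, smul_eq_mul, trace_sum, Matrix.trace_smul,
        Fintype.card_fin, Nat.cast_ofNat] at h2
      exact h2
    have hs0 : s = 0 := by linarith
    have hN0 : (∑ i, t i • vecMulVec (x i) (x i)) = 0 := by
      rw [← heq, hs0, zero_smul]
    intro j k
    rw [← hNapp j k, hN0]
    rfl
  · intro hA
    have hN : (∑ i, t i • vecMulVec (x i) (x i)) = 0 := by
      ext j k; rw [hNapp]; exact hA j k
    have hs : (∑ i, t i * (vecMulVec (x i) (x i)).trace) = 0 := by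
      rw [htr]
      exact Finset.sum_eq_zero fun j _ => hA j j
    rw [hN, hs, zero_smul, sub_zero]



noncomputable def phiMap (x : Fin 5 → Fin 3 → ℝ) : (Fin 5 → ℝ) →ₗ[ℝ] (Fin 3 → ℝ) × ℝ where
  toFun t := (∑ i, t i • x i, ∑ i, t i)
  map_add' a b := by
    simp [add_smul, Finset.sum_add_distrib, Prod.ext_iff]
  map_smul' c a := by
    simp [smul_smul, Finset.smul_sum, Finset.mul_sum, Prod.ext_iff]

lemma phi_surj (x : Fin 5 → Fin 3 → ℝ) (hsum : ∑ i, x i = 0)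
    (hspan : Submodule.span ℝ (Set.range x) = ⊤) :
    LinearMap.range (phiMap x) = ⊤ := by
  have hxi : ∀ i, ((x i, 0) : (Fin 3 → ℝ) × ℝ) ∈ LinearMap.range (phiMap x) := by
    intro i
    refine ⟨(Pi.single i 1 - fun _ => (5:ℝ)⁻¹ : Fin 5 → ℝ), ?_⟩
    have h1 : ∑ k, ((Pi.single i 1 - fun _ => (5:ℝ)⁻¹ : Fin 5 → ℝ)) k • x k
        = x i - (5:ℝ)⁻¹ • ∑ k, x k := by
      simp [sub_smul, Finset.sum_sub_distrib, Pi.single_apply, ite_smul,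
        Finset.smul_sum]
    have h2 : ∑ k, ((Pi.single i 1 - fun _ => (5:ℝ)⁻¹ : Fin 5 → ℝ)) k = 0 := by
      simp [Pi.single_apply, Finset.sum_sub_distrib]
    simp only [phiMap, LinearMap.coe_mk, AddHom.coe_mk, h1, h2, hsum, smul_zero, sub_zero]
  have hone : ((0, 1) : (Fin 3 → ℝ) × ℝ) ∈ LinearMap.range (phiMap x) := by
    refine ⟨(fun _ => (5:ℝ)⁻¹), ?_⟩
    have h1 : ∑ k : Fin 5, (5:ℝ)⁻¹ • x k = (0 : Fin 3 → ℝ) := by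
      rw [← Finset.smul_sum, hsum, smul_zero]
    have h2 : ∑ _k : Fin 5, (5:ℝ)⁻¹ = (1:ℝ) := by
      simp
    simp only [phiMap, LinearMap.coe_mk, AddHom.coe_mk, h1, h2]
  have hy : ∀ y : Fin 3 → ℝ, ((y, 0) : (Fin 3 → ℝ) × ℝ) ∈ LinearMap.range (phiMap x) := by
    intro y
    have hW : (⊤ : Submodule ℝ (Fin 3 → ℝ))
        ≤ Submodule.comap (LinearMap.inl ℝ (Fin 3 → ℝ) ℝ) (LinearMap.range (phiMap x)) := by
      rw [← hspan]
      refine Submodule.span_le.mpr ?_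
      rintro _ ⟨i, rfl⟩
      exact hxi i
    exact hW trivial
  rw [Submodule.eq_top_iff']
  rintro ⟨y, a⟩
  have : ((y, a) : (Fin 3 → ℝ) × ℝ) = (y, 0) + a • (0, 1) := by
    simp [Prod.ext_iff]
  rw [this]
  exact Submodule.add_mem _ (hy y) (Submodule.smul_mem _ a hone)

lemma t_prop (x : Fin 5 → Fin 3 → ℝ) (hsum : ∑ i, x i = 0)
    (hspan : Submodule.span ℝ (Set.range x) = ⊤)
    (t : Fin 5 → ℝ) (htX : ∀ j : Fin 3, ∑ i, t i * x i j = 0) (ht1 : ∑ i, t i = 0)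
    (i j : Fin 5) (hij : i ≠ j) (hx : x i = x j) :
    ∃ c : ℝ, t = c • (Pi.single i (1:ℝ) - Pi.single j 1) := by
  set e : Fin 5 → ℝ := Pi.single i (1:ℝ) - Pi.single j 1 with he
  have he0 : e ≠ 0 := by
    intro h
    have := congrFun h i
    simp [he, Pi.single_apply, hij, hij.symm] at this
  have heker : e ∈ LinearMap.ker (phiMap x) := by
    rw [LinearMap.mem_ker]
    have h1 : ∑ k, e k • x k = x i - x j := by
      simp [he, sub_smul, Finset.sum_sub_distrib, Pi.single_apply, ite_smul]
    have h2 : ∑ k, e k = 0 := by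
      simp [he, Pi.single_apply, Finset.sum_sub_distrib]
    simp only [phiMap, LinearMap.coe_mk, AddHom.coe_mk, h1, h2, hx, sub_self]
    rfl
  have htker : t ∈ LinearMap.ker (phiMap x) := by
    rw [LinearMap.mem_ker]
    have h1 : ∑ k, t k • x k = (0 : Fin 3 → ℝ) := by
      funext j'
      simpa [Finset.sum_apply] using htX j'
    simp only [phiMap, LinearMap.coe_mk, AddHom.coe_mk, h1, ht1]
    rfl
  have hrank : Module.finrank ℝ (LinearMap.ker (phiMap x)) = 1 := by
    have h1 := LinearMap.finrank_range_add_finrank_ker (phiMap x)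
    rw [phi_surj x hsum hspan, finrank_top] at h1
    simp [Module.finrank_prod] at h1
    omega
  have hle : Submodule.span ℝ {e} ≤ LinearMap.ker (phiMap x) := by
    rw [Submodule.span_le, Set.singleton_subset_iff]; exact heker
  have heq : Submodule.span ℝ {e} = LinearMap.ker (phiMap x) := by
    apply Submodule.eq_of_le_of_finrank_le hle
    rw [hrank, finrank_span_singleton he0]
  have htm : t ∈ Submodule.span ℝ ({e} : Set (Fin 5 → ℝ)) := heq ▸ htker
  obtain ⟨c, hc⟩ := Submodule.mem_span_singleton.mp htm
  exact ⟨c, hc.symm⟩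

/-- Theorem 2: for five centered points spanning `ℝ³` and `t ≠ 0` with `Xᵀt = 0` and
`Σ tᵢ = 0`, the matrix `M = Σᵢ tᵢ Bᵢ` is zero iff two of the five points coincide. -/
theorem M_eq_zero_iff_two_points_identical (x : Fin 5 → Fin 3 → ℝ)
    (hsum : ∑ i, x i = 0)
    (hspan : Submodule.span ℝ (Set.range x) = ⊤)
    (t : Fin 5 → ℝ) (ht : t ≠ 0)
    (htX : ∀ j : Fin 3, ∑ i, t i * x i j = 0)
    (ht1 : ∑ i, t i = 0) :
    ∑ i, t i • Bmat x i = 0 ↔ ∃ i j : Fin 5, i ≠ j ∧ x i = x j := by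
  rw [Mzero_iff x t ht1]
  constructor
  · intro hA
    by_cases hc : (univ.filter (fun i => 0 < t i)).card ≤ (univ.filter (fun i => t i < 0)).card
    · exact forward_aux x hsum hspan t ht htX ht1 hA hc
    · push_neg at hc
      have ht' : -t ≠ 0 := neg_ne_zero.mpr ht
      have htX' : ∀ j : Fin 3, ∑ i, (-t) i * x i j = 0 := by
        intro j
        simp only [Pi.neg_apply, neg_mul, Finset.sum_neg_distrib, htX j, neg_zero]
      have ht1' : ∑ i, (-t) i = 0 := by
        simp only [Pi.neg_apply, Finset.sum_neg_distrib, ht1, neg_zero]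
      have hA' : ∀ j k, ∑ i, (-t) i * (x i j * x i k) = 0 := by
        intro j k
        simp only [Pi.neg_apply, neg_mul, Finset.sum_neg_distrib, hA j k, neg_zero]
      have hfP : (univ.filter (fun i => 0 < (-t) i)) = (univ.filter (fun i => t i < 0)) := by
        apply Finset.filter_congr
        intro i _
        simp [neg_pos]
      have hfN : (univ.filter (fun i => (-t) i < 0)) = (univ.filter (fun i => 0 < t i)) := by
        apply Finset.filter_congr
        intro i _
        simp [neg_neg_iff_pos, Left.neg_neg_iff]
      have hc' : (univ.filter (fun i => 0 < (-t) i)).card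
          ≤ (univ.filter (fun i => (-t) i < 0)).card := by
        rw [hfP, hfN]
        omega
      exact forward_aux x hsum hspan (-t) ht' htX' ht1' hA' hc'
  · rintro ⟨i, j, hij, hx⟩
    obtain ⟨c, hc⟩ := t_prop x hsum hspan t htX ht1 i j hij hx
    intro j' k'
    simp only [hc, Pi.smul_apply, Pi.sub_apply, smul_eq_mul, Pi.single_apply, sub_mul,
      ite_mul, one_mul, zero_mul, mul_sub, Finset.sum_sub_distrib, mul_ite, mul_zero,
      Finset.sum_ite_eq', Finset.mem_univ, if_true]
    rw [hx]
    ring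
end

section
/- (Theorem 3) Under the standing hypotheses (five centered points x₁,…,x₅ spanning ℝ³), for every unit vector u ∈ ℝ³ and every c ∈ ℝ³, the following are equivalent: (i) uᵀBᵢu = 2⟨c, xᵢ⟩ for i = 1,…,5 and ⟨c, u⟩ = 0 (system (8)); (ii) c = γ(u)/2, uᵀMu = 0, and ⟨u, γ(u)⟩ = 0 (system (9)). -/
open Matrix

/-- `b(u) ∈ ℝ⁵` with `b(u)ᵢ = uᵀBᵢu`. -/
noncomputable def bvec (x : Fin 5 → Fin 3 → ℝ) (u : Fin 3 → ℝ) : Fin 5 → ℝ :=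
  fun i => u ⬝ᵥ (Bmat x i *ᵥ u)

/-- `γ(u) = T⁻¹ Xᵀ b(u)` where `T = XᵀX`. -/
noncomputable def gammaVec (x : Fin 5 → Fin 3 → ℝ) (u : Fin 3 → ℝ) : Fin 3 → ℝ :=
  ((Matrix.of x)ᵀ * Matrix.of x)⁻¹ *ᵥ ((Matrix.of x)ᵀ *ᵥ bvec x u)

private lemma sum_smul_mulVec (B : Fin 5 → Matrix (Fin 3) (Fin 3) ℝ) (t : Fin 5 → ℝ)
    (u : Fin 3 → ℝ) :
    (∑ i, t i • B i) *ᵥ u = ∑ i, t i • (B i *ᵥ u) := by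
  funext j
  simp only [mulVec, dotProduct, Finset.sum_apply, Matrix.sum_apply, Finset.sum_mul,
    Pi.smul_apply, Matrix.smul_apply, smul_eq_mul, Finset.mul_sum, mul_assoc]
  rw [Finset.sum_comm]

private lemma sum_mulVec' (B : Fin 5 → Matrix (Fin 3) (Fin 3) ℝ) (u : Fin 3 → ℝ) :
    (∑ i, B i) *ᵥ u = ∑ i, (B i *ᵥ u) := by
  funext j
  simp only [mulVec, dotProduct, Finset.sum_apply, Matrix.sum_apply, Finset.sum_mul]
  rw [Finset.sum_comm]

private lemma dot_sum' (u : Fin 3 → ℝ) (w : Fin 5 → Fin 3 → ℝ) :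
    u ⬝ᵥ (∑ i, w i) = ∑ i, u ⬝ᵥ w i := by
  simp only [dotProduct, Finset.sum_apply, Finset.mul_sum]
  rw [Finset.sum_comm]

/-- The sum of the `Bmat` matrices vanishes. -/
private lemma sum_Bmat (x : Fin 5 → Fin 3 → ℝ) : ∑ i, Bmat x i = 0 := by
  unfold Bmat
  have h1 : ∑ i : Fin 5,
      (vecMulVec (x i) (x i) - (5 : ℝ)⁻¹ • ∑ j, vecMulVec (x j) (x j)) = 0 := by
    rw [Finset.sum_sub_distrib, Finset.sum_const]
    simp only [Finset.card_univ, Fintype.card_fin, ← Nat.cast_smul_eq_nsmul ℝ, ← smul_assoc]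
    norm_num
  have h2 : ∑ i : Fin 5,
      (vecMulVec (x i) (x i) - (5 : ℝ)⁻¹ • ∑ j, vecMulVec (x j) (x j)).trace = 0 := by
    rw [← Matrix.trace_sum, h1, Matrix.trace_zero]
  rw [Finset.sum_sub_distrib, ← Finset.sum_smul, h1, h2]
  simp

/-- Theorem 3: for five centered points spanning `ℝ³`, a unit vector `u` and `c ∈ ℝ³`,
system (8) `uᵀBᵢu = 2⟨c,xᵢ⟩ (i = 1,…,5)`, `⟨c,u⟩ = 0` is equivalent to
system (9) `c = γ(u)/2`, `uᵀMu = 0`, `⟨u, γ(u)⟩ = 0`. -/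
theorem system8_iff_system9 (x : Fin 5 → Fin 3 → ℝ)
    (hsum : ∑ i, x i = 0)
    (hspan : Submodule.span ℝ (Set.range x) = ⊤)
    (t : Fin 5 → ℝ) (ht : t ≠ 0)
    (htX : ∀ j : Fin 3, ∑ i, t i * x i j = 0)
    (ht1 : ∑ i, t i = 0)
    (u c : Fin 3 → ℝ) (hu : u ⬝ᵥ u = 1) :
    ((∀ i : Fin 5, u ⬝ᵥ (Bmat x i *ᵥ u) = 2 * (c ⬝ᵥ x i)) ∧ c ⬝ᵥ u = 0) ↔
      (c = (2 : ℝ)⁻¹ • gammaVec x u ∧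
        u ⬝ᵥ ((∑ i, t i • Bmat x i) *ᵥ u) = 0 ∧
        u ⬝ᵥ gammaVec x u = 0) := by
  set X : Matrix (Fin 5) (Fin 3) ℝ := Matrix.of x with hX
  set T : Matrix (Fin 3) (Fin 3) ℝ := Xᵀ * X with hT
  set b : Fin 5 → ℝ := bvec x u with hb
  set γ : Fin 3 → ℝ := gammaVec x u with hγ
  have one5 : (fun _ => (1:ℝ)) = (fun _ => (1:ℝ) : Fin 5 → ℝ) := rfl
  -- Xᵀ kills the all-ones vector and t
  have hX1 : Xᵀ *ᵥ (fun _ => (1:ℝ)) = 0 := by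
    funext j
    have := congrFun hsum j
    simpa [hX, mulVec, dotProduct, Finset.sum_apply] using this
  have hXt : Xᵀ *ᵥ t = 0 := by
    funext j
    have := htX j
    simpa [hX, mulVec, dotProduct, mul_comm] using this
  -- X *ᵥ v = 0 implies v = 0  (columns of Xᵀ = rows of X span ℝ³)
  have hXinj : ∀ v : Fin 3 → ℝ, X *ᵥ v = 0 → v = 0 := by
    intro v hv
    have hdot : ∀ i : Fin 5, x i ⬝ᵥ v = 0 := fun i => congrFun hv i
    have hv' : ∀ w : Fin 3 → ℝ, w ⬝ᵥ v = 0 := by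
      intro w
      have hw : w ∈ Submodule.span ℝ (Set.range x) := hspan ▸ Submodule.mem_top
      induction hw using Submodule.span_induction with
      | mem w hw => obtain ⟨i, rfl⟩ := hw; exact hdot i
      | zero => simp
      | add a b' _ _ ha hb => simp [add_dotProduct, ha, hb]
      | smul r a _ ha => simp [smul_dotProduct, ha]
    have := hv' v
    exact dotProduct_self_eq_zero.mp this
  -- T is invertible
  have hTinj : ∀ v : Fin 3 → ℝ, T *ᵥ v = 0 → v = 0 := by
    intro v hv
    apply hXinj
    have h0 : v ⬝ᵥ (T *ᵥ v) = 0 := by rw [hv]; simp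
    have : (X *ᵥ v) ⬝ᵥ (X *ᵥ v) = 0 := by
      rw [← h0, hT, ← Matrix.mulVec_mulVec, Matrix.dotProduct_mulVec,
        Matrix.mulVec_transpose]
      exact dotProduct_comm ((X *ᵥ v) ᵥ* X) v
    exact dotProduct_self_eq_zero.mp this
  have hTunit : IsUnit T := by
    rw [← Matrix.mulVec_injective_iff_isUnit]
    intro v w hvw
    have : T *ᵥ (v - w) = 0 := by
      rw [Matrix.mulVec_sub, hvw, sub_self]
    have := hTinj _ this
    exact sub_eq_zero.mp this
  have hTdet : IsUnit T.det := (Matrix.isUnit_iff_isUnit_det T).mp hTunit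
  have hTinv : T⁻¹ * T = 1 := Matrix.nonsing_inv_mul T hTdet
  have hTinv' : T * T⁻¹ = 1 := Matrix.mul_nonsing_inv T hTdet
  -- basic dot product bookkeeping
  have hone_b : (fun _ => (1:ℝ)) ⬝ᵥ b = 0 := by
    have : (fun _ => (1:ℝ)) ⬝ᵥ b = ∑ i, b i := by simp [dotProduct]
    rw [this]
    have : ∑ i, b i = u ⬝ᵥ ((∑ i, Bmat x i) *ᵥ u) := by
      rw [sum_mulVec', dot_sum']
      rfl
    rw [this, sum_Bmat]
    simp
  have htb : t ⬝ᵥ b = u ⬝ᵥ ((∑ i, t i • Bmat x i) *ᵥ u) := by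
    rw [sum_smul_mulVec, dot_sum']
    simp only [dotProduct_smul, smul_eq_mul]
    rfl
  -- γ satisfies  Xᵀ (X γ) = Xᵀ b
  have hγdef : γ = T⁻¹ *ᵥ (Xᵀ *ᵥ b) := rfl
  have hXTγ : Xᵀ *ᵥ (X *ᵥ γ) = Xᵀ *ᵥ b := by
    rw [hγdef, Matrix.mulVec_mulVec, Matrix.mulVec_mulVec, hTinv', Matrix.one_mulVec]
  constructor
  · rintro ⟨h8, hcu⟩
    have hbX : b = X *ᵥ ((2:ℝ) • c) := by
      funext i
      have h1 : (X *ᵥ ((2:ℝ) • c)) i = ∑ j, x i j * (2 * c j) := by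
        simp [hX, mulVec, dotProduct]
      rw [h1]
      show u ⬝ᵥ (Bmat x i *ᵥ u) = _
      rw [h8 i, dotProduct, Finset.mul_sum]
      exact Finset.sum_congr rfl (fun j _ => by ring)
    have hγc : γ = (2:ℝ) • c := by
      rw [hγdef, hbX, Matrix.mulVec_mulVec, Matrix.mulVec_mulVec, Matrix.mul_assoc, ← hT,
        hTinv, Matrix.one_mulVec]
    refine ⟨?_, ?_, ?_⟩
    · rw [hγc]; funext j; simp
    · rw [← htb, hbX, Matrix.dotProduct_mulVec, ← Matrix.mulVec_transpose, hXt]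
      simp
    · rw [hγc]
      simp only [dotProduct_smul, smul_eq_mul]
      rw [dotProduct_comm, hcu, mul_zero]
  · rintro ⟨hc, hM, huγ⟩
    have htb0 : t ⬝ᵥ b = 0 := by rw [htb]; exact hM
    set v : Fin 5 → ℝ := b - X *ᵥ γ with hv
    have hv1 : Xᵀ *ᵥ v = 0 := by
      rw [hv, Matrix.mulVec_sub, hXTγ, sub_self]
    have hvone : (fun _ => (1:ℝ)) ⬝ᵥ v = 0 := by
      rw [hv, dotProduct_sub, hone_b, Matrix.dotProduct_mulVec,
        ← Matrix.mulVec_transpose, hX1]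
      simp
    have hvt : t ⬝ᵥ v = 0 := by
      rw [hv, dotProduct_sub, htb0, Matrix.dotProduct_mulVec,
        ← Matrix.mulVec_transpose, hXt]
      simp
    -- kernel of Xᵀ is spanned by (1,…,1) and t
    have hindep : LinearIndependent ℝ ![(fun _ => (1:ℝ) : Fin 5 → ℝ), t] := by
      rw [LinearIndependent.pair_iff]
      intro s r hsr
      have hs : ∀ i : Fin 5, s + r * t i = 0 := by
        intro i
        have := congrFun hsr i
        simpa using this
      have hsum5 : (5:ℝ) * s + r * (∑ i, t i) = 0 := by
        have : ∑ i : Fin 5, (s + r * t i) = 0 := by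
          simp [hs]
        simpa [Finset.sum_add_distrib, Finset.mul_sum] using this
      rw [ht1, mul_zero, add_zero] at hsum5
      have hs0 : s = 0 := by linarith
      refine ⟨hs0, ?_⟩
      subst hs0
      have : r • t = 0 := by
        funext i; have := hs i; simpa using this
      rcases smul_eq_zero.mp this with h | h
      · exact h
      · exact absurd h ht
    have hker : LinearMap.ker (Xᵀ).mulVecLin
        = Submodule.span ℝ (Set.range ![(fun _ => (1:ℝ) : Fin 5 → ℝ), t]) := by
      symm
      apply Submodule.eq_of_le_of_finrank_le
      · rw [Submodule.span_le]
        rintro w ⟨i, rfl⟩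
        fin_cases i
        · exact LinearMap.mem_ker.mpr hX1
        · exact LinearMap.mem_ker.mpr hXt
      · -- finrank ker ≤ finrank span = 2
        have hrange : LinearMap.range (Xᵀ).mulVecLin = ⊤ := by
          rw [Matrix.range_mulVecLin, Matrix.col_transpose]
          exact hspan
        have hrk := LinearMap.finrank_range_add_finrank_ker (Xᵀ).mulVecLin
        rw [hrange, finrank_top, Module.finrank_fin_fun, Module.finrank_fin_fun] at hrk
        have hker5 : Module.finrank ℝ (LinearMap.ker (Xᵀ).mulVecLin) = 2 := by omega
        have hspan2 : Module.finrank ℝ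
            (Submodule.span ℝ (Set.range ![(fun _ => (1:ℝ) : Fin 5 → ℝ), t])) = 2 := by
          rw [finrank_span_eq_card hindep]
          simp
        rw [hker5, hspan2]
    have hvmem : v ∈ Submodule.span ℝ (Set.range ![(fun _ => (1:ℝ) : Fin 5 → ℝ), t]) := by
      rw [← hker]
      exact LinearMap.mem_ker.mpr hv1
    rw [Submodule.mem_span_range_iff_exists_fun] at hvmem
    obtain ⟨d, hd⟩ := hvmem
    have hd' : d 0 • (fun _ => (1:ℝ) : Fin 5 → ℝ) + d 1 • t = v := by
      simpa [Fin.sum_univ_two] using hd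
    have hdot1 : (5:ℝ) * d 0 = 0 := by
      have := congrArg (fun w => (fun _ => (1:ℝ)) ⬝ᵥ w) hd'
      simp only [dotProduct_add, dotProduct_smul, smul_eq_mul] at this
      have h11 : (fun _ => (1:ℝ)) ⬝ᵥ (fun _ => (1:ℝ) : Fin 5 → ℝ) = 5 := by
        simp [dotProduct]
      have h1t : (fun _ => (1:ℝ)) ⬝ᵥ t = 0 := by
        simpa [dotProduct] using ht1
      rw [h11, h1t, hvone, mul_zero, add_zero] at this
      linarith [this]
    have hd0 : d 0 = 0 := by linarith
    have hdt : d 1 * (t ⬝ᵥ t) = 0 := by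
      have := congrArg (fun w => t ⬝ᵥ w) hd'
      simp only [dotProduct_add, dotProduct_smul, smul_eq_mul] at this
      have ht1' : t ⬝ᵥ (fun _ => (1:ℝ) : Fin 5 → ℝ) = 0 := by
        simpa [dotProduct] using ht1
      rw [ht1', hvt, mul_zero, zero_add] at this
      exact this
    have htt : t ⬝ᵥ t ≠ 0 := fun h => ht (dotProduct_self_eq_zero.mp h)
    have hd1 : d 1 = 0 := by
      rcases mul_eq_zero.mp hdt with h | h
      · exact h
      · exact absurd h htt
    have hv0 : v = 0 := by
      rw [← hd', hd0, hd1]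
      simp
    have hbγ : b = X *ᵥ γ := by
      have := sub_eq_zero.mp hv0
      exact this
    constructor
    · intro i
      have hbi : b i = x i ⬝ᵥ γ := by rw [hbγ]; rfl
      have h2 : u ⬝ᵥ (Bmat x i *ᵥ u) = γ ⬝ᵥ x i := by
        rw [show u ⬝ᵥ (Bmat x i *ᵥ u) = b i from rfl, hbi, dotProduct_comm]
      rw [h2, hc, smul_dotProduct, smul_eq_mul]
      ring
    · rw [hc]
      simp only [smul_dotProduct, smul_eq_mul]
      rw [dotProduct_comm, huγ, mul_zero]
end

section
/- For the trigonal bipyramid with h > 0 and any unit vector u = (u₁,u₂,u₃) ∈ ℝ³, the two conditions uᵀMu = 0 and ⟨u, γ(u)⟩ = 0 (system (9)) hold simultaneously if and only if (2h²+1)(u₁² + u₂²) = 2 and u₁(u₁² − 3u₂²) = 0, where M = (1/√6)·diag(6h²−3, 6h²−3, −6) and γ(u) = ((u₂² − u₁²)/2, u₁u₂, 0). -/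
open Matrix

/-- For the trigonal bipyramid with `h > 0` and a unit vector `u`, system (9)
`uᵀMu = 0 ∧ ⟨u, γ(u)⟩ = 0`, with `M = (1/√6)·diag(6h²−3, 6h²−3, −6)` and
`γ(u) = ((u₂² − u₁²)/2, u₁u₂, 0)`, holds iff `(2h²+1)(u₁² + u₂²) = 2` and
`u₁(u₁² − 3u₂²) = 0`. -/
theorem bipyramid_system9_iff (h : ℝ) (h0 : 0 < h) (u : Fin 3 → ℝ) (hu : u ⬝ᵥ u = 1) :
    (u ⬝ᵥ (((Real.sqrt 6)⁻¹ •
          Matrix.diagonal ![6 * h ^ 2 - 3, 6 * h ^ 2 - 3, -6]) *ᵥ u) = 0 ∧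
        u ⬝ᵥ ![(u 1 ^ 2 - u 0 ^ 2) / 2, u 0 * u 1, 0] = 0) ↔
      ((2 * h ^ 2 + 1) * (u 0 ^ 2 + u 1 ^ 2) = 2 ∧
        u 0 * (u 0 ^ 2 - 3 * u 1 ^ 2) = 0) := by
  have hs : (Real.sqrt 6)⁻¹ ≠ 0 := by positivity
  have hu' : u 0 ^ 2 + u 1 ^ 2 + u 2 ^ 2 = 1 := by
    simpa [dotProduct, Fin.sum_univ_three, sq] using hu
  have key1 : u ⬝ᵥ (((Real.sqrt 6)⁻¹ •
      Matrix.diagonal ![6 * h ^ 2 - 3, 6 * h ^ 2 - 3, -6]) *ᵥ u)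
      = (Real.sqrt 6)⁻¹ *
        ((6 * h ^ 2 - 3) * (u 0 ^ 2 + u 1 ^ 2) - 6 * u 2 ^ 2) := by
    simp [dotProduct, mulVec, Fin.sum_univ_three, Matrix.diagonal_apply,
      Fin.ext_iff, -Fin.val_eq_zero_iff]
    ring
  have key2 : u ⬝ᵥ ![(u 1 ^ 2 - u 0 ^ 2) / 2, u 0 * u 1, 0]
      = -(u 0 * (u 0 ^ 2 - 3 * u 1 ^ 2)) / 2 := by
    simp [dotProduct, Fin.sum_univ_three]
    ring
  rw [key1, key2, mul_eq_zero, or_iff_right hs]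
  constructor
  · rintro ⟨h1, h2⟩
    exact ⟨by nlinarith, by linarith⟩
  · rintro ⟨h1, h2⟩
    exact ⟨by nlinarith, by linarith⟩
end
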